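/- Let n ≥ 2, a ≥ 1, let D ⊊ ℝⁿ be a domain, let α be an a-cone arc in D joining x and y, and let s₀ ∈ α bisect α, i.e. ℓ(α[x,s₀]) = ℓ(α[s₀,y]). Then for all s₁, s₂ ∈ α[x,s₀] (and likewise for all s₁, s₂ ∈ α[s₀,y]), one has k_D(s₁,s₂) ≤ ℓ_k(α[s₁,s₂]) ≤ 4a²·k_D(s₁,s₂) + 4a². (This is Lemma 3.13.) -/

import Mathlib

open Set Metric MeasureTheory

noncomputable section

/-- Distance from a point to the boundary of `D`, i.e. to its complement. -/
def distBd {n : ℕ} (D : Set (EuclideanSpace ℝ (Fin n))) (z : EuclideanSpace ℝ (Fin n)) : ℝ :=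
  infDist z Dᶜ

/-- A domain in ℝⁿ: a nonempty, open, connected, proper subset. -/
def IsProperDomain {n : ℕ} (D : Set (EuclideanSpace ℝ (Fin n))) : Prop :=
  IsOpen D ∧ IsConnected D ∧ D ≠ univ

/-- A rectifiable arc in `D`, parametrized by arclength on `[0, len]`:
the length of the subarc between parameters `s ≤ t` is exactly `t - s`. -/
structure Arc (n : ℕ) (D : Set (EuclideanSpace ℝ (Fin n))) where
  len : ℝ
  len_nonneg : 0 ≤ len
  toFun : ℝ → EuclideanSpace ℝ (Fin n)
  injOn : InjOn toFun (Icc 0 len)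
  mem : ∀ t ∈ Icc 0 len, toFun t ∈ D
  unitSpeed : ∀ s ∈ Icc 0 len, ∀ t ∈ Icc 0 len, s ≤ t →
    eVariationOn toFun (Icc s t) = ENNReal.ofReal (t - s)

namespace Arc

variable {n : ℕ} {D : Set (EuclideanSpace ℝ (Fin n))}

/-- The arc `γ` joins `x` to `y`. -/
def Joins (γ : Arc n D) (x y : EuclideanSpace ℝ (Fin n)) : Prop :=
  γ.toFun 0 = x ∧ γ.toFun γ.len = y

/-- Quasihyperbolic length of the subarc of `γ` between parameters `u` and `v`:
`∫ |dz| / d(z)` along the (unit-speed) subarc. -/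
def qhLen (γ : Arc n D) (u v : ℝ) : ℝ :=
  ∫ t in u..v, 1 / distBd D (γ.toFun t)

end Arc

/-- Quasihyperbolic distance in `D`. -/
def qhDist {n : ℕ} (D : Set (EuclideanSpace ℝ (Fin n))) (x y : EuclideanSpace ℝ (Fin n)) : ℝ :=
  sInf { r | ∃ γ : Arc n D, γ.Joins x y ∧ r = γ.qhLen 0 γ.len }

/-- Inner (internal) distance in `D`: infimum of lengths of arcs joining the two points. -/
def innerDist {n : ℕ} (D : Set (EuclideanSpace ℝ (Fin n))) (x y : EuclideanSpace ℝ (Fin n)) : ℝ :=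
  sInf { r | ∃ γ : Arc n D, γ.Joins x y ∧ r = γ.len }

namespace Arc

variable {n : ℕ} {D : Set (EuclideanSpace ℝ (Fin n))}

/-- `γ` is a quasihyperbolic geodesic: its quasihyperbolic length realizes the
quasihyperbolic distance between its endpoints. -/
def IsGeodesic (γ : Arc n D) : Prop :=
  γ.qhLen 0 γ.len = qhDist D (γ.toFun 0) (γ.toFun γ.len)

/-- `γ` is a `c`-cone arc: `min (ℓ(γ[z₁,z]), ℓ(γ[z₂,z])) ≤ c·d(z)` for all `z ∈ γ`. -/
def IsConeArc (γ : Arc n D) (c : ℝ) : Prop :=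
  ∀ t ∈ Icc 0 γ.len, min t (γ.len - t) ≤ c * distBd D (γ.toFun t)

end Arc

/-- `D` is an `a`-John domain. -/
def IsJohn {n : ℕ} (D : Set (EuclideanSpace ℝ (Fin n))) (a : ℝ) : Prop :=
  ∀ x ∈ D, ∀ y ∈ D, ∃ γ : Arc n D, γ.Joins x y ∧ γ.IsConeArc a

/-- `D` is a `c`-uniform domain. -/
def IsUniform {n : ℕ} (D : Set (EuclideanSpace ℝ (Fin n))) (c : ℝ) : Prop :=
  ∀ x ∈ D, ∀ y ∈ D, ∃ γ : Arc n D, γ.Joins x y ∧ γ.IsConeArc c ∧ γ.len ≤ c * dist x y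

/-- `f : D → D'` is an `(M,C)`-CQH homeomorphism (a homeomorphism of `D` onto `D'`
satisfying the coarse quasihyperbolic bi-Lipschitz condition). -/
def IsCQH {n : ℕ} (D D' : Set (EuclideanSpace ℝ (Fin n)))
    (f : EuclideanSpace ℝ (Fin n) → EuclideanSpace ℝ (Fin n)) (M C : ℝ) : Prop :=
  ContinuousOn f D ∧ BijOn f D D' ∧
  ∀ x ∈ D, ∀ y ∈ D,
    (qhDist D x y - C) / M ≤ qhDist D' (f x) (f y) ∧
    qhDist D' (f x) (f y) ≤ M * qhDist D x y + C

/-! ### Auxiliary lemmas for Lemma 3.13 -/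

lemma distBd_pos' {n : ℕ} {D : Set (EuclideanSpace ℝ (Fin n))} (hD : IsProperDomain D)
    {z : EuclideanSpace ℝ (Fin n)} (hz : z ∈ D) : 0 < distBd D z := by
  have hne : Dᶜ.Nonempty := nonempty_compl.mpr hD.2.2
  exact (hD.1.isClosed_compl.notMem_iff_infDist_pos hne).mp (notMem_compl_iff.mpr hz)

namespace Arc

variable {n : ℕ} {D : Set (EuclideanSpace ℝ (Fin n))}

lemma dist_toFun_le (γ : Arc n D) {u v : ℝ} (hu : u ∈ Icc 0 γ.len) (hv : v ∈ Icc 0 γ.len)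
    (huv : u ≤ v) : dist (γ.toFun u) (γ.toFun v) ≤ v - u := by
  have h := γ.unitSpeed u hu v hv huv
  have h2 := eVariationOn.edist_le γ.toFun (s := Icc u v) (x := u) (y := v)
    ⟨le_refl u, huv⟩ ⟨huv, le_refl v⟩
  rw [h, edist_dist] at h2
  exact (ENNReal.ofReal_le_ofReal_iff (by linarith)).mp h2

lemma lipschitzOn (γ : Arc n D) : LipschitzOnWith 1 γ.toFun (Icc 0 γ.len) := by
  apply LipschitzOnWith.of_dist_le_mul
  intro u hu v hv
  rcases le_total u v with h | h
  · have := γ.dist_toFun_le hu hv h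
    rw [Real.dist_eq, NNReal.coe_one, one_mul, abs_sub_comm]
    exact this.trans (le_abs_self _)
  · have := γ.dist_toFun_le hv hu h
    rw [dist_comm, Real.dist_eq, NNReal.coe_one, one_mul]
    exact this.trans (le_abs_self _)

lemma contOn_inv_distBd (hD : IsProperDomain D) (γ : Arc n D) :
    ContinuousOn (fun t => 1 / distBd D (γ.toFun t)) (Icc 0 γ.len) := by
  have h1 : ContinuousOn γ.toFun (Icc 0 γ.len) := γ.lipschitzOn.continuousOn
  have h2 : ContinuousOn (fun t => distBd D (γ.toFun t)) (Icc 0 γ.len) :=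
    (lipschitz_infDist_pt Dᶜ).continuous.comp_continuousOn h1
  exact continuousOn_const.div h2 fun t ht => (distBd_pos' hD (γ.mem t ht)).ne'

/-- Restriction of an arc to a parameter subinterval `[u, v]`, reparametrized on `[0, v-u]`. -/
def restrict (γ : Arc n D) {u v : ℝ} (hu : u ∈ Icc 0 γ.len) (hv : v ∈ Icc 0 γ.len)
    (huv : u ≤ v) : Arc n D where
  len := v - u
  len_nonneg := by linarith
  toFun := fun t => γ.toFun (u + t)
  injOn := by
    intro s hs t ht h
    have hs' : u + s ∈ Icc 0 γ.len := ⟨by linarith [hs.1, hu.1], by linarith [hs.2, hv.2]⟩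
    have ht' : u + t ∈ Icc 0 γ.len := ⟨by linarith [ht.1, hu.1], by linarith [ht.2, hv.2]⟩
    have := γ.injOn hs' ht' h
    linarith
  mem := fun t ht => γ.mem (u + t) ⟨by linarith [ht.1, hu.1], by linarith [ht.2, hv.2]⟩
  unitSpeed := by
    intro s hs t ht hst
    have heq : (fun x => γ.toFun (u + x)) = γ.toFun ∘ (fun x => u + x) := rfl
    have hmono : MonotoneOn (fun x => u + x) (Icc s t) := fun x _ y _ hxy =>
      show u + x ≤ u + y by linarith
    rw [heq, eVariationOn.comp_eq_of_monotoneOn γ.toFun _ hmono, image_const_add_Icc]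
    rw [γ.unitSpeed (u + s) ⟨by linarith [hs.1, hu.1], by linarith [hs.2, hv.2]⟩
      (u + t) ⟨by linarith [hs.1, hst, hu.1], by linarith [ht.2, hv.2]⟩ (by linarith)]
    congr 1
    ring

@[simp] lemma restrict_len (γ : Arc n D) {u v : ℝ} (hu : u ∈ Icc 0 γ.len)
    (hv : v ∈ Icc 0 γ.len) (huv : u ≤ v) : (γ.restrict hu hv huv).len = v - u := rfl

@[simp] lemma restrict_toFun (γ : Arc n D) {u v : ℝ} (hu : u ∈ Icc 0 γ.len)
    (hv : v ∈ Icc 0 γ.len) (huv : u ≤ v) (t : ℝ) :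
    (γ.restrict hu hv huv).toFun t = γ.toFun (u + t) := rfl

lemma restrict_joins (γ : Arc n D) {u v : ℝ} (hu : u ∈ Icc 0 γ.len)
    (hv : v ∈ Icc 0 γ.len) (huv : u ≤ v) :
    (γ.restrict hu hv huv).Joins (γ.toFun u) (γ.toFun v) := by
  constructor
  · rw [restrict_toFun, add_zero]
  · rw [restrict_len, restrict_toFun]
    congr 1
    ring

lemma qhLen_restrict (γ : Arc n D) {u v : ℝ} (hu : u ∈ Icc 0 γ.len)
    (hv : v ∈ Icc 0 γ.len) (huv : u ≤ v) :
    (γ.restrict hu hv huv).qhLen 0 (v - u) = γ.qhLen u v := by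
  show (∫ t in (0:ℝ)..(v - u), 1 / distBd D (γ.toFun (u + t))) = _
  rw [intervalIntegral.integral_comp_add_left (fun x => 1 / distBd D (γ.toFun x)) u]
  rw [add_zero, show u + (v - u) = v by ring]
  rfl

/-- The reversed arc. -/
def reverse (γ : Arc n D) : Arc n D where
  len := γ.len
  len_nonneg := γ.len_nonneg
  toFun := fun t => γ.toFun (γ.len - t)
  injOn := by
    intro s hs t ht h
    have hs' : γ.len - s ∈ Icc 0 γ.len := ⟨by linarith [hs.2], by linarith [hs.1]⟩
    have ht' : γ.len - t ∈ Icc 0 γ.len := ⟨by linarith [ht.2], by linarith [ht.1]⟩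
    have := γ.injOn hs' ht' h
    linarith
  mem := fun t ht => γ.mem (γ.len - t) ⟨by linarith [ht.2], by linarith [ht.1]⟩
  unitSpeed := by
    intro s hs t ht hst
    have heq : (fun x => γ.toFun (γ.len - x)) = γ.toFun ∘ (fun x => γ.len - x) := rfl
    have hanti : AntitoneOn (fun x => γ.len - x) (Icc s t) := fun x _ y _ hxy =>
      sub_le_sub_left hxy γ.len
    rw [heq, eVariationOn.comp_eq_of_antitoneOn γ.toFun _ hanti, image_const_sub_Icc]
    rw [γ.unitSpeed (γ.len - t) ⟨by linarith [ht.2], by linarith [hs.1, hst]⟩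
      (γ.len - s) ⟨by linarith [hs.2, hst], by linarith [hs.1]⟩ (by linarith)]
    congr 1
    ring

@[simp] lemma reverse_len (γ : Arc n D) : γ.reverse.len = γ.len := rfl

@[simp] lemma reverse_toFun (γ : Arc n D) (t : ℝ) :
    γ.reverse.toFun t = γ.toFun (γ.len - t) := rfl

lemma qhLen_reverse (γ : Arc n D) (u v : ℝ) :
    γ.reverse.qhLen u v = γ.qhLen (γ.len - v) (γ.len - u) := by
  show (∫ t in u..v, 1 / distBd D (γ.toFun (γ.len - t))) = _
  rw [intervalIntegral.integral_comp_sub_left (fun x => 1 / distBd D (γ.toFun x)) γ.len]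
  rfl

lemma qhLen_nonneg (γ : Arc n D) {u v : ℝ} (huv : u ≤ v) : 0 ≤ γ.qhLen u v :=
  intervalIntegral.integral_nonneg huv fun t _ => one_div_nonneg.mpr infDist_nonneg

end Arc

lemma qhDist_bddBelow {n : ℕ} {D : Set (EuclideanSpace ℝ (Fin n))}
    {x y : EuclideanSpace ℝ (Fin n)} :
    BddBelow { r | ∃ γ : Arc n D, γ.Joins x y ∧ r = γ.qhLen 0 γ.len } :=
  ⟨0, fun r ⟨γ, _, hr⟩ => hr ▸ γ.qhLen_nonneg γ.len_nonneg⟩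

lemma qhDist_le_of_arc {n : ℕ} {D : Set (EuclideanSpace ℝ (Fin n))} (γ : Arc n D) {u v : ℝ}
    (hu : u ∈ Icc 0 γ.len) (hv : v ∈ Icc 0 γ.len) (huv : u ≤ v) :
    qhDist D (γ.toFun u) (γ.toFun v) ≤ γ.qhLen u v :=
  csInf_le qhDist_bddBelow
    ⟨γ.restrict hu hv huv, γ.restrict_joins hu hv huv, (γ.qhLen_restrict hu hv huv).symm⟩

lemma qhDist_nonneg_of {n : ℕ} {D : Set (EuclideanSpace ℝ (Fin n))} (γ0 : Arc n D)
    {x y : EuclideanSpace ℝ (Fin n)} (h : γ0.Joins x y) : 0 ≤ qhDist D x y :=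
  le_csInf ⟨_, γ0, h, rfl⟩ fun r ⟨γ, _, hr⟩ => hr ▸ γ.qhLen_nonneg γ.len_nonneg

lemma qhLen_ge_log {n : ℕ} {D : Set (EuclideanSpace ℝ (Fin n))} (hD : IsProperDomain D)
    (γ : Arc n D) :
    Real.log (distBd D (γ.toFun γ.len)) - Real.log (distBd D (γ.toFun 0)) ≤
      γ.qhLen 0 γ.len := by
  have hL : 0 ≤ γ.len := γ.len_nonneg
  have h0 : (0:ℝ) ∈ Icc 0 γ.len := ⟨le_refl _, hL⟩
  have hLm : γ.len ∈ Icc 0 γ.len := ⟨hL, le_refl _⟩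
  have hd0pos : 0 < distBd D (γ.toFun 0) := distBd_pos' hD (γ.mem 0 h0)
  have key : ∀ t ∈ Icc 0 γ.len, distBd D (γ.toFun t) ≤ distBd D (γ.toFun 0) + t := by
    intro t ht
    have h1 : distBd D (γ.toFun t) ≤ distBd D (γ.toFun 0) + dist (γ.toFun t) (γ.toFun 0) :=
      infDist_le_infDist_add_dist
    have h2 := γ.dist_toFun_le h0 ht ht.1
    rw [dist_comm] at h1
    linarith
  have hcomp : (∫ t in (0:ℝ)..γ.len, 1 / (distBd D (γ.toFun 0) + t)) =
      Real.log ((distBd D (γ.toFun 0) + γ.len) / distBd D (γ.toFun 0)) := by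
    rw [intervalIntegral.integral_comp_add_left (fun x => 1 / x) (distBd D (γ.toFun 0)),
      add_zero]
    exact integral_one_div (notMem_uIcc_of_lt hd0pos (by linarith))
  have hint : (∫ t in (0:ℝ)..γ.len, 1 / (distBd D (γ.toFun 0) + t)) ≤ γ.qhLen 0 γ.len := by
    apply intervalIntegral.integral_mono_on hL
    · apply ContinuousOn.intervalIntegrable
      apply continuousOn_const.div ((continuous_const.add continuous_id).continuousOn)
      intro t ht
      rw [uIcc_of_le hL] at ht
      have := ht.1
      exact (show (0:ℝ) < distBd D (γ.toFun 0) + t by linarith).ne'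
    · exact ((γ.contOn_inv_distBd hD).mono (by rw [uIcc_of_le hL])).intervalIntegrable
    · intro t ht
      exact one_div_le_one_div_of_le (distBd_pos' hD (γ.mem t ht)) (key t ht)
  have hlog : Real.log (distBd D (γ.toFun γ.len)) - Real.log (distBd D (γ.toFun 0)) ≤
      Real.log ((distBd D (γ.toFun 0) + γ.len) / distBd D (γ.toFun 0)) := by
    rw [Real.log_div (by positivity) hd0pos.ne']
    have hdL : 0 < distBd D (γ.toFun γ.len) := distBd_pos' hD (γ.mem _ hLm)
    have := Real.log_le_log hdL (key γ.len hLm)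
    linarith
  linarith

lemma log_le_qhDist {n : ℕ} {D : Set (EuclideanSpace ℝ (Fin n))} (hD : IsProperDomain D)
    {x y : EuclideanSpace ℝ (Fin n)} (γ0 : Arc n D) (h0 : γ0.Joins x y) :
    Real.log (distBd D y) - Real.log (distBd D x) ≤ qhDist D x y := by
  refine le_csInf ⟨γ0.qhLen 0 γ0.len, γ0, h0, rfl⟩ ?_
  rintro r ⟨γ, ⟨hx, hy⟩, rfl⟩
  have := qhLen_ge_log hD γ
  rwa [hx, hy] at this

lemma qhDist_symm {n : ℕ} (D : Set (EuclideanSpace ℝ (Fin n)))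
    (x y : EuclideanSpace ℝ (Fin n)) : qhDist D x y = qhDist D y x := by
  have key : ∀ x y : EuclideanSpace ℝ (Fin n),
      { r | ∃ γ : Arc n D, γ.Joins x y ∧ r = γ.qhLen 0 γ.len } ⊆
      { r | ∃ γ : Arc n D, γ.Joins y x ∧ r = γ.qhLen 0 γ.len } := by
    rintro x y r ⟨γ, ⟨hx, hy⟩, rfl⟩
    refine ⟨γ.reverse, ⟨?_, ?_⟩, ?_⟩
    · rw [Arc.reverse_toFun, sub_zero, hy]
    · rw [Arc.reverse_len, Arc.reverse_toFun, sub_self, hx]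
    · rw [Arc.reverse_len, Arc.qhLen_reverse, sub_self, sub_zero]
  unfold qhDist
  rw [Set.Subset.antisymm (key x y) (key y x)]

lemma half_bound {n : ℕ} {D : Set (EuclideanSpace ℝ (Fin n))} (hD : IsProperDomain D)
    {a : ℝ} (ha : 1 ≤ a) (α : Arc n D) (hcone : α.IsConeArc a)
    {t₀ : ℝ} (ht₀ : t₀ ∈ Icc 0 α.len) (hb : t₀ ≤ α.len - t₀) :
    ∀ s₁ ∈ Icc (0:ℝ) t₀, ∀ s₂ ∈ Icc (0:ℝ) t₀, s₁ ≤ s₂ →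
      qhDist D (α.toFun s₁) (α.toFun s₂) ≤ α.qhLen s₁ s₂ ∧
      α.qhLen s₁ s₂ ≤ 4 * a ^ 2 * qhDist D (α.toFun s₁) (α.toFun s₂) + 4 * a ^ 2 := by
  intro s₁ hs₁ s₂ hs₂ h12
  have ha0 : 0 < a := by linarith
  have h1 : s₁ ∈ Icc 0 α.len := ⟨hs₁.1, by linarith [hs₁.2, ht₀.2]⟩
  have h2 : s₂ ∈ Icc 0 α.len := ⟨by linarith [hs₁.1], by linarith [hs₂.2, ht₀.2]⟩
  have hmem : ∀ t ∈ Icc s₁ s₂, t ∈ Icc 0 α.len := fun t ht =>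
    ⟨by linarith [ht.1, hs₁.1], by linarith [ht.2, h2.2]⟩
  have gpos : ∀ t ∈ Icc 0 α.len, 0 < distBd D (α.toFun t) :=
    fun t ht => distBd_pos' hD (α.mem t ht)
  have hconeT : ∀ t ∈ Icc 0 t₀, t ≤ a * distBd D (α.toFun t) := by
    intro t ht
    have htl : t ∈ Icc 0 α.len := ⟨ht.1, by linarith [ht.2, ht₀.2]⟩
    have hm := hcone t htl
    rwa [min_eq_left (by linarith [ht.2] : t ≤ α.len - t)] at hm
  refine ⟨qhDist_le_of_arc α h1 h2 h12, ?_⟩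
  set k := qhDist D (α.toFun s₁) (α.toFun s₂) with hkdef
  have hk0 : 0 ≤ k := qhDist_nonneg_of (α.restrict h1 h2 h12) (α.restrict_joins h1 h2 h12)
  have hklog : Real.log (distBd D (α.toFun s₂)) - Real.log (distBd D (α.toFun s₁)) ≤ k :=
    log_le_qhDist hD (α.restrict h1 h2 h12) (α.restrict_joins h1 h2 h12)
  have hd1pos : 0 < distBd D (α.toFun s₁) := gpos s₁ h1
  set d₁ := distBd D (α.toFun s₁) with hd₁def
  clear_value k d₁
  have hintg : ∀ u v, u ∈ Icc 0 α.len → v ∈ Icc 0 α.len → u ≤ v →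
      IntervalIntegrable (fun t => 1 / distBd D (α.toFun t)) volume u v := by
    intro u v hu hv huv
    apply ContinuousOn.intervalIntegrable
    apply (α.contOn_inv_distBd hD).mono
    rw [uIcc_of_le huv]
    exact Icc_subset_Icc hu.1 hv.2
  have hlow1 : ∀ t ∈ Icc s₁ s₂, d₁ - (t - s₁) ≤ distBd D (α.toFun t) := by
    intro t ht
    have htl := hmem t ht
    have hd := α.dist_toFun_le h1 htl ht.1
    have hi : distBd D (α.toFun s₁) ≤ distBd D (α.toFun t) + dist (α.toFun s₁) (α.toFun t) :=
      infDist_le_infDist_add_dist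
    rw [← hd₁def] at hi
    linarith
  have hasq : (1:ℝ) ≤ a ^ 2 := by nlinarith
  rcases le_or_gt s₂ (s₁ + d₁ / 2) with hcase | hcase
  · -- short case : `s₂ - s₁ ≤ d₁ / 2`
    have hub : ∀ t ∈ Icc s₁ s₂, 1 / distBd D (α.toFun t) ≤ 2 / d₁ := by
      intro t ht
      have h := hlow1 t ht
      have hpos := gpos t (hmem t ht)
      rw [div_le_div_iff₀ hpos hd1pos]
      linarith [ht.2]
    have hle : α.qhLen s₁ s₂ ≤ (s₂ - s₁) * (2 / d₁) := by
      calc α.qhLen s₁ s₂ ≤ ∫ t in s₁..s₂, 2 / d₁ :=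
            intervalIntegral.integral_mono_on h12 (hintg s₁ s₂ h1 h2 h12)
              intervalIntegrable_const hub
        _ = (s₂ - s₁) * (2 / d₁) := by
            rw [intervalIntegral.integral_const, smul_eq_mul]
    have h1' : α.qhLen s₁ s₂ ≤ 1 := by
      have h2d : (s₂ - s₁) * (2 / d₁) ≤ 1 := by
        rw [mul_div_assoc', div_le_one hd1pos]
        linarith
      linarith
    nlinarith [mul_nonneg (mul_nonneg (by norm_num : (0:ℝ) ≤ 4) (sq_nonneg a)) hk0]
  · -- long case : `m < s₂`
    set m := s₁ + d₁ / 2 with hmdef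
    clear_value m
    have hm0 : 0 < m := by
      have := hs₁.1
      rw [hmdef]
      linarith
    have hmlen : m ∈ Icc 0 α.len := ⟨le_of_lt hm0, by linarith [h2.2]⟩
    have hsplit : α.qhLen s₁ s₂ = α.qhLen s₁ m + α.qhLen m s₂ :=
      (intervalIntegral.integral_add_adjacent_intervals
        (hintg s₁ m h1 hmlen (by rw [hmdef]; linarith [hd1pos])) (hintg m s₂ hmlen h2 hcase.le)).symm
    have hpart1 : α.qhLen s₁ m ≤ 1 := by
      have hub : ∀ t ∈ Icc s₁ m, 1 / distBd D (α.toFun t) ≤ 2 / d₁ := by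
        intro t ht
        have htm : t ∈ Icc s₁ s₂ := ⟨ht.1, by linarith [ht.2, hcase]⟩
        have h := hlow1 t htm
        have hpos := gpos t (hmem t htm)
        rw [div_le_div_iff₀ hpos hd1pos]
        have hmm := hmdef.le
        have hmm' := hmdef.ge
        linarith [ht.2]
      have hle : α.qhLen s₁ m ≤ (m - s₁) * (2 / d₁) := by
        calc α.qhLen s₁ m ≤ ∫ t in s₁..m, 2 / d₁ :=
              intervalIntegral.integral_mono_on (by rw [hmdef]; linarith [hd1pos])
                (hintg s₁ m h1 hmlen (by rw [hmdef]; linarith [hd1pos]))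
                intervalIntegrable_const hub
          _ = (m - s₁) * (2 / d₁) := by
              rw [intervalIntegral.integral_const, smul_eq_mul]
      have hone : (m - s₁) * (2 / d₁) = 1 := by
        rw [hmdef, mul_div_assoc', div_eq_one_iff_eq hd1pos.ne']
        ring
      linarith
    have hpart2 : α.qhLen m s₂ ≤ a * (Real.log s₂ - Real.log m) := by
      have hub : ∀ t ∈ Icc m s₂, 1 / distBd D (α.toFun t) ≤ a * (1 / t) := by
        intro t ht
        have htpos : 0 < t := lt_of_lt_of_le hm0 ht.1
        have htT : t ∈ Icc 0 t₀ := ⟨htpos.le, le_trans ht.2 hs₂.2⟩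
        have hc := hconeT t htT
        have hpos := gpos t ⟨htT.1, by linarith [htT.2, ht₀.2]⟩
        rw [mul_one_div, div_le_div_iff₀ hpos htpos]
        linarith
      have hintq : IntervalIntegrable (fun t => a * (1 / t)) volume m s₂ := by
        apply ContinuousOn.intervalIntegrable
        apply continuousOn_const.mul
        apply continuousOn_const.div continuousOn_id
        intro t ht
        rw [uIcc_of_le hcase.le] at ht
        exact ne_of_gt (lt_of_lt_of_le hm0 ht.1)
      calc α.qhLen m s₂ ≤ ∫ t in m..s₂, a * (1 / t) :=
            intervalIntegral.integral_mono_on hcase.le (hintg m s₂ hmlen h2 hcase.le) hintq hub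
        _ = a * Real.log (s₂ / m) := by
            rw [intervalIntegral.integral_const_mul,
              integral_one_div (notMem_uIcc_of_lt hm0 (lt_trans hm0 hcase))]
        _ = a * (Real.log s₂ - Real.log m) := by
            rw [Real.log_div (lt_trans hm0 hcase).ne' hm0.ne']
    have hs₂pos : 0 < s₂ := lt_trans hm0 hcase
    have hs₂a : Real.log s₂ ≤ Real.log a + Real.log (distBd D (α.toFun s₂)) := by
      have hc := hconeT s₂ hs₂
      have hl := Real.log_le_log hs₂pos hc
      rwa [Real.log_mul ha0.ne' (gpos s₂ h2).ne'] at hl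
    have hmd : Real.log d₁ - Real.log 2 ≤ Real.log m := by
      have hdm : d₁ / 2 ≤ m := by
        rw [hmdef]
        linarith [hs₁.1]
      have hl := Real.log_le_log (by positivity) hdm
      rwa [Real.log_div hd1pos.ne' (by norm_num)] at hl
    have hchain : Real.log s₂ - Real.log m ≤ Real.log a + Real.log 2 + k := by
      linarith [hklog, hs₂a, hmd]
    have hloga : Real.log a ≤ a - 1 := Real.log_le_sub_one_of_pos ha0
    have hlog2 : Real.log 2 ≤ 1 := by
      have := Real.log_le_sub_one_of_pos (by norm_num : (0:ℝ) < 2)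
      linarith
    have hfin2 : α.qhLen m s₂ ≤ a * (Real.log a + Real.log 2 + k) :=
      le_trans hpart2 (mul_le_mul_of_nonneg_left hchain ha0.le)
    have ha2a : (0:ℝ) ≤ 4 * a ^ 2 - a := by nlinarith [mul_le_mul_of_nonneg_left ha ha0.le]
    have hak : a * k ≤ 4 * a ^ 2 * k := by nlinarith [mul_nonneg hk0 ha2a]
    have hconst : a * (Real.log a + Real.log 2) ≤ 4 * a ^ 2 - 1 := by nlinarith
    rw [hsplit]
    have hexp : a * (Real.log a + Real.log 2 + k) =
        a * (Real.log a + Real.log 2) + a * k := by ring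
    linarith
/-- **Lemma 3.13.** Let `D ⊊ ℝⁿ` (`n ≥ 2`) be a domain, `α` an `a`-cone arc (`a ≥ 1`)
joining `x` and `y` in `D`, and let `s₀ = α(t₀)` bisect `α`.  Then for all
`s₁, s₂ ∈ α[x,s₀]` (and likewise for all `s₁, s₂ ∈ α[s₀,y]`):
`k_D(s₁,s₂) ≤ ℓ_k(α[s₁,s₂]) ≤ 4a²·k_D(s₁,s₂) + 4a²`. -/
theorem lemma_3_13 (n : ℕ) (hn : 2 ≤ n) (a : ℝ) (ha : 1 ≤ a)
    (D : Set (EuclideanSpace ℝ (Fin n))) (hD : IsProperDomain D)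
    (α : Arc n D) (x y : EuclideanSpace ℝ (Fin n)) (hxy : α.Joins x y)
    (hcone : α.IsConeArc a)
    (t₀ : ℝ) (ht₀ : t₀ ∈ Icc (0:ℝ) α.len) (hbis : t₀ = α.len - t₀) :
    (∀ s₁ ∈ Icc (0:ℝ) t₀, ∀ s₂ ∈ Icc (0:ℝ) t₀, s₁ ≤ s₂ →
      qhDist D (α.toFun s₁) (α.toFun s₂) ≤ α.qhLen s₁ s₂ ∧
      α.qhLen s₁ s₂ ≤ 4 * a ^ 2 * qhDist D (α.toFun s₁) (α.toFun s₂) + 4 * a ^ 2) ∧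
    (∀ s₁ ∈ Icc t₀ α.len, ∀ s₂ ∈ Icc t₀ α.len, s₁ ≤ s₂ →
      qhDist D (α.toFun s₁) (α.toFun s₂) ≤ α.qhLen s₁ s₂ ∧
      α.qhLen s₁ s₂ ≤ 4 * a ^ 2 * qhDist D (α.toFun s₁) (α.toFun s₂) + 4 * a ^ 2) := by
  constructor
  · intro s₁ hs₁ s₂ hs₂ h
    exact half_bound hD ha α hcone ht₀ (le_of_eq hbis) s₁ hs₁ s₂ hs₂ h
  · intro s₁ hs₁ s₂ hs₂ h
    have hrev : α.reverse.IsConeArc a := by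
      intro t ht
      rw [Arc.reverse_len] at ht
      have h' := hcone (α.len - t) ⟨by linarith [ht.2], by linarith [ht.1]⟩
      rw [sub_sub_cancel, min_comm] at h'
      rw [Arc.reverse_len, Arc.reverse_toFun]
      exact h'
    have ht₀' : t₀ ∈ Icc 0 α.reverse.len := by rw [Arc.reverse_len]; exact ht₀
    have hb' : t₀ ≤ α.reverse.len - t₀ := by rw [Arc.reverse_len]; linarith [hbis]
    have hm1 : α.len - s₂ ∈ Icc (0:ℝ) t₀ :=
      ⟨by linarith [hs₂.2], by linarith [hs₂.1, hbis]⟩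
    have hm2 : α.len - s₁ ∈ Icc (0:ℝ) t₀ :=
      ⟨by linarith [hs₁.2], by linarith [hs₁.1, hbis]⟩
    have H := half_bound hD ha α.reverse hrev ht₀' hb'
      (α.len - s₂) hm1 (α.len - s₁) hm2 (by linarith)
    simp only [Arc.reverse_toFun, Arc.qhLen_reverse, sub_sub_cancel] at H
    rw [qhDist_symm D (α.toFun s₂) (α.toFun s₁)] at H
    exact H
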